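/- Let E_1, ..., E_N (with N ≥ 1) and F be real inner product spaces, and let E = (E_1 × ⋯ × E_N) × F be their product, equipped with the product inner product. Let L : E → ℝ be differentiable at a point ω, with gradient ∇L(ω) = G = ((g_1, ..., g_N), g_θ), where g_j ∈ E_j and g_θ ∈ F. Let Ḡ = ((ḡ_1, ..., ḡ_N), 0) with ḡ_j ∈ E_j, and define the augmented gradient Ĝ = G + Ḡ = ((g_1 + ḡ_1, ..., g_N + ḡ_N), g_θ). If ⟨g_j, ḡ_j⟩ > 0 for all j with 1 ≤ j ≤ N, then Ĝ is a descent direction for L at ω: there exists ᾱ > 0 such that for all α with 0 < α < ᾱ, L(ω − α • Ĝ) < L(ω). -/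

import Mathlib

open scoped RealInnerProductSpace BigOperators

/-- Let `E = (E₁ × ⋯ × E_N) ×₂ F` (with `N ≥ 1`) be an `L²`-product of real inner
product spaces, and let `L : E → ℝ` be differentiable at `ω` with gradient
`G = ((g 0, …, g (N-1)), gθ)` (i.e. its Fréchet derivative at `ω` is `h ↦ ⟪G, h⟫`).
Let `Ḡ = ((ḡ 0, …, ḡ (N-1)), 0)` and let `Ĝ = G + Ḡ` be the augmented gradient.
If `⟪g j, ḡ j⟫ > 0` for every `j`, then `Ĝ` is a descent direction for `L` at `ω`:
there exists `ᾱ > 0` such that `L (ω - α • Ĝ) < L ω` for all `0 < α < ᾱ`. -/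
theorem augmented_gradient_descent_direction
    {N : ℕ} (hN : 1 ≤ N)
    (E₁ : Fin N → Type*) [∀ j, NormedAddCommGroup (E₁ j)]
    [∀ j, InnerProductSpace ℝ (E₁ j)]
    (F : Type*) [NormedAddCommGroup F] [InnerProductSpace ℝ F]
    (L : WithLp 2 ((PiLp 2 E₁) × F) → ℝ)
    (ω : WithLp 2 ((PiLp 2 E₁) × F))
    (g gbar : ∀ j, E₁ j) (gθ : F)
    (G Gbar Ghat : WithLp 2 ((PiLp 2 E₁) × F))
    (hG : G = (WithLp.equiv 2 ((PiLp 2 E₁) × F)).symm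
        ((WithLp.equiv 2 (∀ j, E₁ j)).symm g, gθ))
    (hGbar : Gbar = (WithLp.equiv 2 ((PiLp 2 E₁) × F)).symm
        ((WithLp.equiv 2 (∀ j, E₁ j)).symm gbar, 0))
    (hGhat : Ghat = G + Gbar)
    (hL : HasFDerivAt L (innerSL ℝ G) ω)
    (hpos : ∀ j, 0 < ⟪g j, gbar j⟫) :
    ∃ ᾱ : ℝ, 0 < ᾱ ∧ ∀ α : ℝ, 0 < α → α < ᾱ → L (ω - α • Ghat) < L ω := by
  have hiGB : ⟪G, Gbar⟫ = ∑ j, ⟪g j, gbar j⟫ := by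
    subst hG hGbar
    simp [WithLp.prod_inner_apply, PiLp.inner_apply]
  have hGBpos : (0:ℝ) < ⟪G, Gbar⟫ := by
    rw [hiGB]
    have : Nonempty (Fin N) := Fin.pos_iff_nonempty.mp hN
    exact Finset.sum_pos (fun j _ => hpos j) Finset.univ_nonempty
  have hc : (0:ℝ) < ⟪G, Ghat⟫ := by
    have : ⟪G, Ghat⟫ = ‖G‖^2 + ⟪G, Gbar⟫ := by
      rw [hGhat, inner_add_right, real_inner_self_eq_norm_sq]
    nlinarith [sq_nonneg ‖G‖]
  set c : ℝ := ⟪G, Ghat⟫ with hcdef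
  have hφ : HasDerivAt (fun α : ℝ => L (ω - α • Ghat)) (-c) 0 := by
    have h1 : HasDerivAt (fun α : ℝ => ω - α • Ghat) (-Ghat) 0 := by
      simpa using ((hasDerivAt_id (0:ℝ)).smul_const Ghat).const_sub ω
    have hL' : HasFDerivAt L (innerSL ℝ G) (ω - (0:ℝ) • Ghat) := by simpa using hL
    have h2 := hL'.comp_hasDerivAt (x := (0:ℝ)) h1
    simpa only [Function.comp_def, innerSL_apply_apply, inner_neg_right, hcdef] using h2
  have hslope := hasDerivAt_iff_tendsto_slope.mp hφ
  have hneg : ∀ᶠ α in nhdsWithin (0:ℝ) (Set.Ioi 0),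
      L (ω - α • Ghat) < L ω := by
    have h3 : ∀ᶠ α in nhdsWithin (0:ℝ) {(0:ℝ)}ᶜ, slope (fun α : ℝ => L (ω - α • Ghat)) 0 α < 0 := by
      have := hslope (Iio_mem_nhds (show -c < 0 by linarith))
      filter_upwards [this] with α hα using hα
    have h4 : nhdsWithin (0:ℝ) (Set.Ioi 0) ≤ nhdsWithin (0:ℝ) {(0:ℝ)}ᶜ :=
      nhdsWithin_mono _ (fun x hx => ne_of_gt hx)
    filter_upwards [h4 h3, self_mem_nhdsWithin] with α hα (hα0 : (0:ℝ) < α)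
    have : (L (ω - α • Ghat) - L (ω - (0:ℝ) • Ghat)) / (α - 0) < 0 := by
      simpa [slope_def_field, div_eq_inv_mul] using hα
    have hlt := div_neg_iff.mp this
    rcases hlt with ⟨h, h'⟩ | ⟨h, h'⟩
    · linarith
    · simp only [zero_smul, sub_zero] at h
      linarith
  rcases mem_nhdsGT_iff_exists_Ioo_subset.mp hneg with ⟨u, hu, hsub⟩
  exact ⟨u, hu, fun α h1 h2 => hsub ⟨h1, h2⟩⟩
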